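/- Let a_1,…,a_n ≥ 1 be real numbers and let Y = |O, A_1,…,A_n| be the n-dimensional simplex with vertices the origin O and A_i = a_i·e_i (where e_i is the i-th standard basis vector), i = 1,…,n. Then ν(Y) = (a_1 − 1)·(a_2 − 1)·…·(a_n − 1). In particular, for Y_a = {x ∈ (ℝ_{≥0})^n : x_1 + … + x_n ≤ a} one has ν(Y_a) = (a − 1)^n. -/

import Mathlib

open MeasureTheory

/-- The nonnegative orthant in `ℝ^n`. -/
def orthant (n : ℕ) : Set (Fin n → ℝ) := {x | ∀ i, 0 ≤ x i}

/-- The coordinate subspace `ℝ^I = {x : x_i = 0 for i ∉ I}`. -/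
def coordSub {n : ℕ} (I : Finset (Fin n)) : Set (Fin n → ℝ) := {x | ∀ i ∉ I, x i = 0}

/-- The projection `π_I` setting the coordinates indexed by `I` to zero. -/
def coordProj {n : ℕ} (I : Finset (Fin n)) (x : Fin n → ℝ) : Fin n → ℝ :=
  fun i => if i ∈ I then 0 else x i

/-- `|I|`-dimensional Lebesgue volume of `X ∩ ℝ^I` computed inside `ℝ^I`. -/
noncomputable def coordVol {n : ℕ} (I : Finset (Fin n)) (X : Set (Fin n → ℝ)) : ℝ :=
  (volume ((fun (y : I → ℝ) => (fun i => if h : i ∈ I then y ⟨i, h⟩ else 0 : Fin n → ℝ)) ⁻¹' X)).toReal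

/-- The Newton number of `X` computed relative to the coordinate set `K`
(for the ambient space `ℝ^K`); taking `K = univ` gives the usual Newton number. -/
noncomputable def newtonNumberOn {n : ℕ} (K : Finset (Fin n)) (X : Set (Fin n → ℝ)) : ℝ :=
  ∑ I ∈ K.powerset, (-1 : ℝ) ^ (K.card - I.card) * (Nat.factorial I.card : ℝ) * coordVol I X

/-- `ℝ^I` is a full-supporting coordinate subspace for the simplex with vertices `P`:
it contains exactly `|I| + 1` of the vertices. -/
def FullSupp {n : ℕ} (P : Fin (n+1) → (Fin n → ℝ)) (I : Finset (Fin n)) : Prop :=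
  Nat.card {j : Fin (n+1) // P j ∈ coordSub I} = I.card + 1

/-- A compact polyhedron: finite union of compact convex polytopes. -/
def IsCompactPolyhedron {n : ℕ} (X : Set (Fin n → ℝ)) : Prop :=
  ∃ (k : ℕ) (F : Fin k → Finset (Fin n → ℝ)),
    X = ⋃ i, convexHull ℝ (↑(F i) : Set (Fin n → ℝ))

/-- A pure `n`-dimensional compact polyhedron in `ℝ^n`: finite union of `n`-dimensional
compact convex polytopes. -/
def IsPureCompactPolyhedron {n : ℕ} (X : Set (Fin n → ℝ)) : Prop :=
  ∃ (k : ℕ) (F : Fin k → Finset (Fin n → ℝ)),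
    X = (⋃ i, convexHull ℝ (↑(F i) : Set (Fin n → ℝ))) ∧
    ∀ i, affineSpan ℝ (↑(F i) : Set (Fin n → ℝ)) = ⊤

/-- A quasi-convenient polyhedron in the nonnegative orthant. -/
def QuasiConvenient {n : ℕ} (X : Set (Fin n → ℝ)) : Prop :=
  IsCompactPolyhedron X ∧ X ⊆ orthant n ∧ (0 : Fin n → ℝ) ∈ X ∧
  (∀ P ∈ Set.extremePoints ℝ X, ∀ i, P i ≠ 0 → 1 ≤ P i) ∧
  ∀ I : Finset (Fin n),
    Nonempty ((X ∩ coordSub I : Set (Fin n → ℝ)) ≃ₜ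
      (Metric.closedBall (0 : EuclideanSpace ℝ (Fin I.card)) 1))

/-- `F^l_k(d_1,…,d_k) = Σ_{i_1+⋯+i_k=l-k} d_1^{i_1+1}⋯d_k^{i_k+1}`, where `d j`
denotes `d_j` for `1 ≤ j ≤ k`. -/
def Fpoly (k l : ℕ) (d : ℕ → ℕ) : ℕ :=
  ∑ c ∈ Finset.Nat.antidiagonalTuple k (l - k), ∏ j : Fin k, d (j.val + 1) ^ (c j + 1)

/-- `G^l_k(d_1,…,d_k) = Σ_{i_1+⋯+i_k=l-k} d_1^{i_1}⋯d_k^{i_k}`. -/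
def Gpoly (k l : ℕ) (d : ℕ → ℕ) : ℕ :=
  ∑ c ∈ Finset.Nat.antidiagonalTuple k (l - k), ∏ j : Fin k, d (j.val + 1) ^ (c j)

open Classical in
/-- The `r`-th Newton number of `(d_1,…,d_r)`-type, relative to the coordinate set `K`. -/
noncomputable def rNewtonOn {n : ℕ} (K : Finset (Fin n)) (r : ℕ) (d : ℕ → ℕ)
    (X : Set (Fin n → ℝ)) : ℝ :=
  (∑ I ∈ K.powerset.filter (fun I => r ≤ I.card),
      (-1 : ℝ) ^ (K.card - I.card) * (Fpoly r I.card d : ℝ) *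
        (Nat.factorial I.card : ℝ) * coordVol I X)
  + (if (0 : Fin n → ℝ) ∈ X then 1 else 0) * (-1 : ℝ) ^ (K.card - r + 1)


lemma simplexSet_closed {m : Type*} [Fintype m] (d : m → ℝ) (t : ℝ) :
    IsClosed {y : m → ℝ | (∀ i, 0 ≤ y i) ∧ ∑ i, y i / d i ≤ t} := by
  have h1 : IsClosed {y : m → ℝ | ∀ i, 0 ≤ y i} := by
    have : {y : m → ℝ | ∀ i, 0 ≤ y i} = ⋂ i, {y : m → ℝ | 0 ≤ y i} := by
      ext y; simp
    rw [this]
    exact isClosed_iInter fun i => isClosed_le continuous_const (continuous_apply i)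
  have h2 : IsClosed {y : m → ℝ | ∑ i, y i / d i ≤ t} :=
    isClosed_le (continuous_finset_sum _ fun i _ => (continuous_apply i).div_const _)
      continuous_const
  exact h1.inter h2

lemma vol_simplex_fin (m : ℕ) (d : Fin m → ℝ) (hd : ∀ i, 0 < d i) (t : ℝ) (ht : 0 ≤ t) :
    volume {y : Fin m → ℝ | (∀ i, 0 ≤ y i) ∧ ∑ i, y i / d i ≤ t}
      = ENNReal.ofReal (t ^ m * (∏ i, d i) / m.factorial) := by
  induction m generalizing t with
  | zero =>
      have : {y : Fin 0 → ℝ | (∀ i, 0 ≤ y i) ∧ ∑ i, y i / d i ≤ t} = Set.univ := by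
        ext y; simp [ht]
      rw [this, volume_pi, Measure.pi_univ]
      simp
  | succ m ih =>
      have hd0 : (0:ℝ) < d 0 := hd 0
      have hd0' : d 0 ≠ 0 := ne_of_gt hd0
      set S := {y : Fin (m+1) → ℝ | (∀ i, 0 ≤ y i) ∧ ∑ i, y i / d i ≤ t} with hS
      have hmeas : MeasurableSet S := (simplexSet_closed d t).measurableSet
      have hp := (volume_preserving_piFinSuccAbove (fun _ : Fin (m+1) => ℝ) 0).symm
      have hpre : (MeasurableEquiv.piFinSuccAbove (fun _ : Fin (m+1) => ℝ) 0).symm ⁻¹' S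
          = {p : ℝ × (Fin m → ℝ) | (0 ≤ p.1 ∧ ∀ i, 0 ≤ p.2 i) ∧
              p.1 / d 0 + ∑ i, p.2 i / d (Fin.succ i) ≤ t} := by
        ext ⟨x0, y⟩
        simp only [Set.mem_preimage, hS, Set.mem_setOf_eq, MeasurableEquiv.piFinSuccAbove,
          MeasurableEquiv.symm_mk, MeasurableEquiv.coe_mk, Equiv.symm_symm]
        simp [Fin.insertNthEquiv, Fin.insertNth_zero, Fin.forall_fin_succ, Fin.sum_univ_succ,
          Fin.cons_zero, Fin.cons_succ]
      have hmeas2 : MeasurableSet ((MeasurableEquiv.piFinSuccAbove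
          (fun _ : Fin (m+1) => ℝ) 0).symm ⁻¹' S) :=
        (MeasurableEquiv.piFinSuccAbove (fun _ : Fin (m+1) => ℝ) 0).symm.measurable hmeas
      rw [← hp.measure_preimage hmeas.nullMeasurableSet]
      rw [hpre] at hmeas2
      rw [hpre, Measure.volume_eq_prod, Measure.prod_apply hmeas2]
      simp only [Set.preimage_setOf_eq]
      have key : ∀ x0 : ℝ,
          volume {y : Fin m → ℝ | (0 ≤ x0 ∧ ∀ i, 0 ≤ y i) ∧
              x0 / d 0 + ∑ i, y i / d (Fin.succ i) ≤ t}
            = Set.indicator (Set.Icc 0 (t * d 0))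
                (fun x0 => ENNReal.ofReal
                  ((t - x0 / d 0) ^ m * (∏ i, d (Fin.succ i)) / m.factorial)) x0 := by
        intro x0
        by_cases hx : x0 ∈ Set.Icc 0 (t * d 0)
        · obtain ⟨hx0, hx1⟩ := hx
          have hts : 0 ≤ t - x0 / d 0 := by
            rw [sub_nonneg, div_le_iff₀ hd0]
            exact hx1
          have : {y : Fin m → ℝ | (0 ≤ x0 ∧ ∀ i, 0 ≤ y i) ∧
              x0 / d 0 + ∑ i, y i / d (Fin.succ i) ≤ t}
              = {y : Fin m → ℝ | (∀ i, 0 ≤ y i) ∧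
                  ∑ i, y i / d (Fin.succ i) ≤ t - x0 / d 0} := by
            ext y
            simp only [Set.mem_setOf_eq]
            constructor
            · rintro ⟨⟨-, h1⟩, h2⟩; exact ⟨h1, by linarith⟩
            · rintro ⟨h1, h2⟩; exact ⟨⟨hx0, h1⟩, by linarith⟩
          rw [this, ih (fun i => d (Fin.succ i)) (fun i => hd _) _ hts,
            Set.indicator_of_mem (Set.mem_Icc.mpr ⟨hx0, hx1⟩) _]
        · have : {y : Fin m → ℝ | (0 ≤ x0 ∧ ∀ i, 0 ≤ y i) ∧
              x0 / d 0 + ∑ i, y i / d (Fin.succ i) ≤ t} = ∅ := by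
            ext y
            simp only [Set.mem_setOf_eq, Set.mem_empty_iff_false, iff_false]
            rintro ⟨⟨hx0, h1⟩, h2⟩
            apply hx
            have hsum : 0 ≤ ∑ i, y i / d (Fin.succ i) :=
              Finset.sum_nonneg fun i _ => div_nonneg (h1 i) (hd _).le
            exact Set.mem_Icc.mpr ⟨hx0, (div_le_iff₀ hd0).mp (by linarith)⟩
          rw [this, Set.indicator_of_notMem hx]
          simp
      have htd : (0:ℝ) ≤ t * d 0 := mul_nonneg ht hd0.le
      have key2 : ∀ x0 : ℝ, (Set.Icc 0 (t * d 0)).indicator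
            (fun x0 => ENNReal.ofReal
              ((t - x0 / d 0) ^ m * (∏ i, d (Fin.succ i)) / m.factorial)) x0
          = (Set.Icc 0 (t * d 0)).indicator
            (fun x0 => ENNReal.ofReal
              ((t - x0 / d 0) ^ m * ((∏ i, d (Fin.succ i)) / m.factorial))) x0 := by
        intro x0; congr 1; ext x; rw [mul_div_assoc]
      simp only [key, key2]
      rw [lintegral_indicator measurableSet_Icc]
      set C : ℝ := (∏ i, d (Fin.succ i)) / m.factorial with hC
      have hCnn : 0 ≤ C := div_nonneg (Finset.prod_nonneg fun i _ => (hd _).le)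
        (Nat.cast_nonneg _)
      have hcont : Continuous fun x0 : ℝ => (t - x0 / d 0) ^ m * C := by fun_prop
      rw [← ofReal_integral_eq_lintegral_ofReal
        (hcont.integrableOn_Icc)
        ((ae_restrict_iff' measurableSet_Icc).mpr (ae_of_all _ fun x hx => by
          have : 0 ≤ t - x / d 0 := by
            rw [sub_nonneg, div_le_iff₀ hd0]
            exact hx.2
          positivity))]
      have hint : ∫ x in Set.Icc 0 (t * d 0), (t - x / d 0) ^ m * C
          = d 0 * t ^ (m+1) / (m+1) * C := by
        rw [integral_Icc_eq_integral_Ioc, ← intervalIntegral.integral_of_le htd,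
          intervalIntegral.integral_mul_const]
        have hFTC : ∀ x : ℝ, HasDerivAt
            (fun x : ℝ => -(d 0 / (m+1)) * (t - x / d 0) ^ (m+1))
            ((t - x / d 0) ^ m) x := by
          intro x
          have h1 : HasDerivAt (fun x : ℝ => t - x / d 0) (-(1 / d 0)) x := by
            simpa using ((hasDerivAt_id x).div_const (d 0)).const_sub t
          have h2 := (h1.fun_pow (m+1)).const_mul (-(d 0 / (m+1)))
          refine h2.congr_deriv ?_
          have : ((m:ℝ)+1) ≠ 0 := by positivity
          rw [Nat.add_sub_cancel, Nat.cast_add_one]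
          field_simp
        rw [intervalIntegral.integral_eq_sub_of_hasDerivAt (fun x _ => hFTC x)
          ((Continuous.intervalIntegrable (by fun_prop) _ _))]
        have hm1 : ((m:ℝ)+1) ≠ 0 := by positivity
        have he : t - t * d 0 / d 0 = 0 := by field_simp; ring
        rw [he, zero_pow (Nat.succ_ne_zero m)]
        field_simp
        simp only [neg_zero, sub_zero, zero_sub, neg_neg, mul_div_cancel_left₀ _ hd0']
        ring
      rw [hint]
      congr 1
      rw [hC, Fin.prod_univ_succ, Nat.factorial_succ]
      have : ((m:ℝ)+1) ≠ 0 := by positivity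
      field_simp
      push_cast
      ring

lemma vol_simplex (ι : Type*) [Fintype ι] (d : ι → ℝ) (hd : ∀ i, 0 < d i) (t : ℝ) (ht : 0 ≤ t) :
    volume {y : ι → ℝ | (∀ i, 0 ≤ y i) ∧ ∑ i, y i / d i ≤ t}
      = ENNReal.ofReal (t ^ (Fintype.card ι) * (∏ i, d i) / (Fintype.card ι).factorial) := by
  set e : Fin (Fintype.card ι) ≃ ι := (Fintype.equivFin ι).symm with he
  have hp := volume_measurePreserving_piCongrLeft (fun _ : ι => ℝ) e
  have hmeas := (simplexSet_closed d t).measurableSet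
  rw [← hp.measure_preimage hmeas.nullMeasurableSet]
  have hpre : (MeasurableEquiv.piCongrLeft (fun _ : ι => ℝ) e) ⁻¹'
      {y : ι → ℝ | (∀ i, 0 ≤ y i) ∧ ∑ i, y i / d i ≤ t}
      = {y : Fin (Fintype.card ι) → ℝ | (∀ i, 0 ≤ y i) ∧ ∑ i, y i / d (e i) ≤ t} := by
    ext y
    have happ : ∀ i : ι, (MeasurableEquiv.piCongrLeft (fun _ : ι => ℝ) e) y i = y (e.symm i) := by
      intro i
      simp [MeasurableEquiv.piCongrLeft, Equiv.piCongrLeft_apply, eq_rec_constant]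
    simp only [Set.mem_preimage, Set.mem_setOf_eq, happ]
    constructor
    · rintro ⟨h1, h2⟩
      refine ⟨fun j => by simpa using h1 (e j), ?_⟩
      rw [← Equiv.sum_comp e (fun i => y (e.symm i) / d i)] at h2
      simpa using h2
    · rintro ⟨h1, h2⟩
      refine ⟨fun i => h1 (e.symm i), ?_⟩
      rw [← Equiv.sum_comp e (fun i => y (e.symm i) / d i)]
      simpa using h2
  rw [hpre, vol_simplex_fin _ (fun i => d (e i)) (fun i => hd _) t ht,
    Equiv.prod_comp e d]

lemma coordVol_simplex {n : ℕ} (I : Finset (Fin n)) (d : Fin n → ℝ) (hd : ∀ i, 0 < d i)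
    (t : ℝ) (ht : 0 ≤ t) :
    coordVol I {x : Fin n → ℝ | (∀ i, 0 ≤ x i) ∧ ∑ i, x i / d i ≤ t}
      = t ^ I.card * (∏ i ∈ I, d i) / I.card.factorial := by
  unfold coordVol
  have hpre : ((fun (y : I → ℝ) => (fun i => if h : i ∈ I then y ⟨i, h⟩ else 0 : Fin n → ℝ)) ⁻¹'
      {x : Fin n → ℝ | (∀ i, 0 ≤ x i) ∧ ∑ i, x i / d i ≤ t})
      = {y : I → ℝ | (∀ j, 0 ≤ y j) ∧ ∑ j, y j / d j.1 ≤ t} := by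
    ext y
    simp only [Set.mem_preimage, Set.mem_setOf_eq]
    have hsum : ∑ i : Fin n, (if h : i ∈ I then y ⟨i, h⟩ else 0) / d i
        = ∑ j : I, y j / d j.1 := by
      rw [← Finset.sum_add_sum_compl I]
      have h2 : ∑ i ∈ Iᶜ, (if h : i ∈ I then y ⟨i, h⟩ else 0) / d i = 0 := by
        apply Finset.sum_eq_zero
        intro i hi
        rw [dif_neg (Finset.mem_compl.mp hi), zero_div]
      rw [h2, add_zero]
      rw [Finset.univ_eq_attach, ← Finset.sum_attach I
        (fun i => (if h : i ∈ I then y ⟨i, h⟩ else 0) / d i)]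
      apply Finset.sum_congr rfl
      intro j _
      rw [dif_pos j.2]
    rw [hsum]
    constructor
    · rintro ⟨h1, h2⟩
      refine ⟨fun j => by simpa [dif_pos j.2] using h1 j.1, h2⟩
    · rintro ⟨h1, h2⟩
      refine ⟨fun i => ?_, h2⟩
      by_cases h : i ∈ I
      · simpa [dif_pos h] using h1 ⟨i, h⟩
      · simp [dif_neg h]
  rw [hpre, vol_simplex _ (fun j : I => d j.1) (fun j => hd _) t ht]
  rw [ENNReal.toReal_ofReal (div_nonneg (mul_nonneg (pow_nonneg ht _)
    (Finset.prod_nonneg fun j _ => (hd j.1).le)) (Nat.cast_nonneg _))]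
  congr 2
  · rw [Fintype.card_coe]
  · rw [Finset.univ_eq_attach, Finset.prod_attach I d]
  · rw [Fintype.card_coe]

lemma newton_simplex (n : ℕ) (d : Fin n → ℝ) (hd : ∀ i, 0 < d i) (t : ℝ) (ht : 0 ≤ t) :
    newtonNumberOn Finset.univ {x : Fin n → ℝ | (∀ i, 0 ≤ x i) ∧ ∑ i, x i / d i ≤ t}
      = ∏ i, (t * d i - 1) := by
  unfold newtonNumberOn
  have hterm : ∀ I ∈ (Finset.univ : Finset (Fin n)).powerset,
      (-1 : ℝ) ^ ((Finset.univ : Finset (Fin n)).card - I.card) * (Nat.factorial I.card : ℝ) *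
        coordVol I {x : Fin n → ℝ | (∀ i, 0 ≤ x i) ∧ ∑ i, x i / d i ≤ t}
      = (∏ i ∈ I, (t * d i)) * ∏ i ∈ Finset.univ \ I, (-1 : ℝ) := by
    intro I hI
    rw [coordVol_simplex I d hd t ht]
    rw [Finset.prod_const, Finset.card_sdiff_of_subset (Finset.mem_powerset.mp hI),
      Finset.prod_mul_distrib, Finset.prod_const]
    have hfac : (Nat.factorial I.card : ℝ) ≠ 0 := by
      exact_mod_cast Nat.factorial_ne_zero I.card
    field_simp
  rw [Finset.sum_congr rfl hterm, ← Finset.prod_add]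
  apply Finset.prod_congr rfl
  intro i _
  ring

lemma simplex_convex {n : ℕ} (d : Fin n → ℝ) (t : ℝ) :
    Convex ℝ {x : Fin n → ℝ | (∀ i, 0 ≤ x i) ∧ ∑ i, x i / d i ≤ t} := by
  have h1 : Convex ℝ {x : Fin n → ℝ | ∀ i, 0 ≤ x i} := by
    have : {x : Fin n → ℝ | ∀ i, 0 ≤ x i} = ⋂ i, {x : Fin n → ℝ | 0 ≤ x i} := by
      ext x; simp
    rw [this]
    exact convex_iInter fun i => convex_halfSpace_ge
      ⟨fun x y => by simp, fun c x => by simp⟩ 0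
  have h2 : Convex ℝ {x : Fin n → ℝ | ∑ i, x i / d i ≤ t} :=
    convex_halfSpace_le
      ⟨fun x y => by simp [add_div, Finset.sum_add_distrib],
       fun c x => by simp [Finset.mul_sum, smul_eq_mul, mul_div_assoc]⟩ t
  exact h1.inter h2

lemma hull_eq {n : ℕ} (a : Fin n → ℝ) (ha : ∀ i, 0 < a i) :
    convexHull ℝ (insert (0 : Fin n → ℝ) (Set.range fun i => Pi.single i (a i)))
      = {x : Fin n → ℝ | (∀ i, 0 ≤ x i) ∧ ∑ i, x i / a i ≤ 1} := by
  apply Set.Subset.antisymm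
  · apply convexHull_min
    · rintro x hx
      rcases Set.mem_insert_iff.mp hx with rfl | ⟨i, rfl⟩
      · constructor
        · intro i; simp
        · simp
      · constructor
        · intro j
          by_cases h : j = i
          · subst h; simpa using (ha j).le
          · simp [Pi.single_eq_of_ne h]
        · have : ∑ j, (Pi.single i (a i) : Fin n → ℝ) j / a j = a i / a i := by
            rw [Finset.sum_eq_single i]
            · simp
            · intro j _ hj
              simp [Pi.single_eq_of_ne hj]
            · simp
          show ∑ j : Fin n, (Pi.single i (a i) : Fin n → ℝ) j / a j ≤ 1
          rw [this, div_self (ha i).ne']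
    · exact simplex_convex a 1
  · rintro x ⟨hx1, hx2⟩
    classical
    set w : Option (Fin n) → ℝ := fun o => Option.elim o (1 - ∑ i, x i / a i) (fun i => x i / a i)
      with hw
    set z : Option (Fin n) → (Fin n → ℝ) := fun o => Option.elim o 0 (fun i => Pi.single i (a i))
      with hz
    have hw0 : ∀ o ∈ (Finset.univ : Finset (Option (Fin n))), 0 ≤ w o := by
      rintro (_ | i) -
      · simpa [hw] using hx2
      · exact div_nonneg (hx1 i) (ha i).le
    have hws : ∑ o, w o = 1 := by
      rw [Fintype.sum_option]
      simp [hw]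
    have hmem : ∀ o ∈ (Finset.univ : Finset (Option (Fin n))), z o ∈
        insert (0 : Fin n → ℝ) (Set.range fun i => Pi.single i (a i)) := by
      rintro (_ | i) -
      · exact Set.mem_insert _ _
      · exact Set.mem_insert_iff.mpr (Or.inr ⟨i, rfl⟩)
    have hcm := Finset.centerMass_mem_convexHull Finset.univ hw0 (by rw [hws]; norm_num) hmem
    have hcmeq : Finset.univ.centerMass w z = x := by
      rw [Finset.centerMass_eq_of_sum_1 _ _ hws]
      funext j
      rw [Finset.sum_apply]
      rw [← Finset.sum_add_sum_compl {some j}]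
      have hrest : ∑ o ∈ ({some j} : Finset (Option (Fin n)))ᶜ, (w o • z o) j = 0 := by
        apply Finset.sum_eq_zero
        rintro (_ | i) ho
        · simp [hz]
        · have hij : i ≠ j := by
            intro h; subst h
            simp at ho
          simp [hz, Pi.single_eq_of_ne hij.symm]
      rw [hrest, add_zero, Finset.sum_singleton]
      simp only [hw, hz, Option.elim, Pi.smul_apply, smul_eq_mul, Pi.single_eq_same]
      rw [div_mul_cancel₀ _ (ha j).ne']
    rwa [hcmeq] at hcm

theorem stmt7 (n : ℕ) (a : Fin n → ℝ) (ha : ∀ i, 1 ≤ a i) (b : ℝ) (hb : 1 ≤ b) :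
    newtonNumberOn Finset.univ
        (convexHull ℝ (insert (0 : Fin n → ℝ) (Set.range fun i => Pi.single i (a i)))) =
      ∏ i, (a i - 1) ∧
    newtonNumberOn Finset.univ {x : Fin n → ℝ | (∀ i, 0 ≤ x i) ∧ ∑ i, x i ≤ b} =
      (b - 1) ^ n := by
  constructor
  · have ha' : ∀ i, 0 < a i := fun i => lt_of_lt_of_le zero_lt_one (ha i)
    rw [hull_eq a ha', newton_simplex n a ha' 1 zero_le_one]
    apply Finset.prod_congr rfl
    intro i _
    rw [one_mul]
  · have hset : {x : Fin n → ℝ | (∀ i, 0 ≤ x i) ∧ ∑ i, x i ≤ b}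
        = {x : Fin n → ℝ | (∀ i, 0 ≤ x i) ∧ ∑ i, x i / (fun _ : Fin n => (1:ℝ)) i ≤ b} := by
      ext x; simp
    rw [hset, newton_simplex n (fun _ => 1) (fun _ => zero_lt_one) b
      (le_trans zero_le_one hb)]
    simp
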